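/- Let n ≥ 3 be an integer and s, t ∈ ℂ. Working in the Laurent polynomial ring ℂ[q, q⁻¹] with q the canonical unit, the family of identities l(n+1−j, n+1−i, n−k; q,s,t) = l(i,j,k; q,s,t), for all i, j with 1 ≤ i, j ≤ n, i ≠ j, and all k with 1 ≤ k ≤ n−1, holds if and only if s = t. (This is the computational content of the statement that the quantum Lie algebra (sl_n)_h(p), p = t/s, admits the Dynkin diagram automorphism τ(X_{ij}) = −X_{n+1−j,n+1−i}, τ(H_k) = H_{n−k} iff p = 1.) -/

import Mathlib

open LaurentPolynomial
/-- The canonical unit `q = T 1` of the Laurent polynomial ring `ℂ[q, q⁻¹]`. -/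
noncomputable def qUnit : (LaurentPolynomial ℂ)ˣ := (LaurentPolynomial.isUnit_T (R := ℂ) 1).unit

lemma qUnit_zpow (m : ℤ) : ((qUnit ^ m : (LaurentPolynomial ℂ)ˣ) : LaurentPolynomial ℂ) = T m := by
  induction m using Int.induction_on with
  | zero => simp [T_zero]
  | succ m ih =>
      rw [zpow_add_one, Units.val_mul, ih]
      show T (m : ℤ) * ((LaurentPolynomial.isUnit_T (R := ℂ) 1).unit : LaurentPolynomial ℂ) = _
      rw [IsUnit.unit_spec, ← T_add]
  | pred m ih =>
      rw [zpow_sub_one, Units.val_mul, ih]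
      have hinv : ((qUnit⁻¹ : (LaurentPolynomial ℂ)ˣ) : LaurentPolynomial ℂ) = T (-1) := by
        apply Units.inv_eq_of_mul_eq_one_right
        show ((LaurentPolynomial.isUnit_T (R := ℂ) 1).unit : LaurentPolynomial ℂ) * _ = 1
        rw [IsUnit.unit_spec, ← T_add, add_neg_cancel, T_zero]
      rw [hinv, ← T_add]
      ring_nf

/-- The structure constants `l(i,j,k; q,s,t)` of the quantum Lie algebra `(sl_n)_h(t/s)`,
appearing in `[H_k, X_{ij}]_h = l_{ij}(H_k)·X_{ij}`, computed in the Laurent polynomial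
ring `ℂ[q, q⁻¹]` with `s, t ∈ ℂ` regarded as constants. -/
noncomputable def slnL (s t : ℂ) (n i j k : ℤ) : LaurentPolynomial ℂ :=
  ((qUnit ^ (1 - k) : (LaurentPolynomial ℂ)ˣ) * (if k = i then (1 : LaurentPolynomial ℂ) else 0)
      - (qUnit ^ (-1 - k) : (LaurentPolynomial ℂ)ˣ)
        * (if k = i - 1 then (1 : LaurentPolynomial ℂ) else 0))
      * (LaurentPolynomial.C s + LaurentPolynomial.C t * (qUnit ^ n : (LaurentPolynomial ℂ)ˣ))
    - ((qUnit ^ (k - 1) : (LaurentPolynomial ℂ)ˣ) * (if k = j then (1 : LaurentPolynomial ℂ) else 0)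
      - (qUnit ^ (k + 1) : (LaurentPolynomial ℂ)ˣ)
        * (if k = j - 1 then (1 : LaurentPolynomial ℂ) else 0))
      * (LaurentPolynomial.C s + LaurentPolynomial.C t * (qUnit ^ (-n) : (LaurentPolynomial ℂ)ˣ))

lemma slnL_eq (s t : ℂ) (n i j k : ℤ) : slnL s t n i j k =
    (T (1 - k) * (if k = i then (1 : LaurentPolynomial ℂ) else 0)
      - T (-1 - k) * (if k = i - 1 then 1 else 0)) * (C s + C t * T n)
    - (T (k - 1) * (if k = j then 1 else 0)
      - T (k + 1) * (if k = j - 1 then 1 else 0)) * (C s + C t * T (-n)) := by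
  simp only [slnL, qUnit_zpow]

/-- for an integer `n ≥ 3` and `s, t ∈ ℂ`, the family of identities
`l(n+1-j, n+1-i, n-k; q,s,t) = l(i,j,k; q,s,t)` in `ℂ[q, q⁻¹]`, for all `1 ≤ i, j ≤ n` with
`i ≠ j` and all `1 ≤ k ≤ n-1`, holds if and only if `s = t`.  (This is the computational
content of the statement that `(sl_n)_h(p)`, `p = t/s`, admits the Dynkin diagram
automorphism `τ(X_{ij}) = -X_{n+1-j,n+1-i}`, `τ(H_k) = H_{n-k}` iff `p = 1`.) -/
theorem slnL_tau_invariant_iff (n : ℤ) (hn : 3 ≤ n) (s t : ℂ) :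
    (∀ i j k : ℤ, 1 ≤ i → i ≤ n → 1 ≤ j → j ≤ n → i ≠ j → 1 ≤ k → k ≤ n - 1 →
        slnL s t n (n + 1 - j) (n + 1 - i) (n - k) = slnL s t n i j k) ↔ s = t := by
  constructor
  · intro h
    have hspec := h 1 n 1 le_rfl (by omega) (by omega) le_rfl (by omega) le_rfl (by omega)
    rw [slnL_eq, slnL_eq] at hspec
    simp only [show (n - 1 = n + 1 - n) ↔ False from iff_false_intro (by omega),
      show (n - 1 = n + 1 - n - 1) ↔ False from iff_false_intro (by omega),
      show (n - 1 = n + 1 - 1) ↔ False from iff_false_intro (by omega),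
      show (n - 1 = n + 1 - 1 - 1) ↔ True from iff_true_intro (by omega),
      show ((1:ℤ) = 1) ↔ True from iff_true_intro rfl,
      show ((1:ℤ) = 1 - 1) ↔ False from iff_false_intro (by omega),
      show ((1:ℤ) = n) ↔ False from iff_false_intro (by omega),
      show ((1:ℤ) = n - 1) ↔ False from iff_false_intro (by omega),
      if_true, if_false, mul_one, mul_zero, zero_mul, sub_zero, zero_sub,
      neg_mul, zero_mul, mul_zero, sub_neg_eq_add, zero_add] at hspec
    -- hspec shape?
    have key : C s * T n + C t = C s + C t * T n := by
      have h1 : (T (n - 1 + 1) : LaurentPolynomial ℂ) = T n := by congr 1; ring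
      have h2 : (T (1 - (1:ℤ)) : LaurentPolynomial ℂ) = 1 := by
        rw [show (1 - (1:ℤ)) = 0 from by ring, T_zero]
      have hTn : (T n : LaurentPolynomial ℂ) * T (-n) = 1 := by
        rw [← T_add, add_neg_cancel, T_zero]
      linear_combination hspec - (C s + C t * T (-n)) * h1 - C t * hTn + (C s + C t * T n) * h2
    have hfac : (C s - C t) * ((T n : LaurentPolynomial ℂ) - 1) = 0 := by
      linear_combination key
    rcases mul_eq_zero.mp hfac with hC | hT
    · have hC' : (LaurentPolynomial.C s : LaurentPolynomial ℂ) = C t := by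
        linear_combination hC
      simpa using congrArg (fun p => p.coeff 0) hC'
    · exfalso
      have hT' : (T n : LaurentPolynomial ℂ) = T 0 := by
        rw [T_zero]; linear_combination hT
      have := congrArg (fun p => p.coeff 0) hT'; simp at this
      omega
  · rintro rfl
    intro i j k hi hi' hj hj' hij hk hk'
    rw [slnL_eq, slnL_eq]
    simp only [show (n - k = n + 1 - j) ↔ (k = j - 1) from by omega,
      show (n - k = n + 1 - j - 1) ↔ (k = j) from by omega,
      show (n - k = n + 1 - i) ↔ (k = i - 1) from by omega,
      show (n - k = n + 1 - i - 1) ↔ (k = i) from by omega]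
    generalize (if k = i then (1 : LaurentPolynomial ℂ) else 0) = a
    generalize (if k = i - 1 then (1 : LaurentPolynomial ℂ) else 0) = b
    generalize (if k = j then (1 : LaurentPolynomial ℂ) else 0) = c
    generalize (if k = j - 1 then (1 : LaurentPolynomial ℂ) else 0) = d
    have e1 : (T (1 - (n - k)) : LaurentPolynomial ℂ) = T (k + 1) * T (-n) := by
      rw [← T_add]; congr 1; ring
    have e2 : (T (-1 - (n - k)) : LaurentPolynomial ℂ) = T (k - 1) * T (-n) := by
      rw [← T_add]; congr 1; ring
    have e3 : (T (n - k - 1) : LaurentPolynomial ℂ) = T (-1 - k) * T n := by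
      rw [← T_add]; congr 1; ring
    have e4 : (T (n - k + 1) : LaurentPolynomial ℂ) = T (1 - k) * T n := by
      rw [← T_add]; congr 1; ring
    have hTn : (T n : LaurentPolynomial ℂ) * T (-n) = 1 := by
      rw [← T_add, add_neg_cancel, T_zero]
    rw [e1, e2, e3, e4]
    linear_combination (C s * (T (k+1) * d - T (k-1) * c - T (-1-k) * b + T (1-k) * a)) * hTn
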